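/- For positive definite matrices A, B, the function g(x) = trace(A^(2x) · B^(2(1-x))) is log-convex on ℝ: for all x, y, g((x+y)/2)² ≤ g(x)·g(y). -/

import Mathlib

open Matrix MeasureTheory
open scoped ComplexOrder

/-- Apply a real function to a Hermitian matrix via the spectral decomposition. -/
noncomputable def matFun {n : ℕ} (A : Matrix (Fin n) (Fin n) ℂ) (hA : A.IsHermitian)
    (g : ℝ → ℝ) : Matrix (Fin n) (Fin n) ℂ :=
  (hA.eigenvectorUnitary : Matrix (Fin n) (Fin n) ℂ) *
    Matrix.diagonal (fun i => (g (hA.eigenvalues i) : ℂ)) *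
    star (hA.eigenvectorUnitary : Matrix (Fin n) (Fin n) ℂ)

/-- Real power of a Hermitian matrix via the spectral decomposition. -/
noncomputable def mpow {n : ℕ} (A : Matrix (Fin n) (Fin n) ℂ) (hA : A.IsHermitian)
    (p : ℝ) : Matrix (Fin n) (Fin n) ℂ :=
  matFun A hA (fun x => x ^ p)

lemma matFun_mul {n : ℕ} (A : Matrix (Fin n) (Fin n) ℂ) (hA : A.IsHermitian)
    (g h : ℝ → ℝ) :
    matFun A hA g * matFun A hA h = matFun A hA (fun t => g t * h t) := by
  have h1 : star (hA.eigenvectorUnitary : Matrix (Fin n) (Fin n) ℂ) *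
      (hA.eigenvectorUnitary : Matrix (Fin n) (Fin n) ℂ) = 1 :=
    Unitary.coe_star_mul_self hA.eigenvectorUnitary
  simp only [matFun, Matrix.mul_assoc]
  rw [← Matrix.mul_assoc (star _) _ _, h1, Matrix.one_mul,
    ← Matrix.mul_assoc (Matrix.diagonal _) (Matrix.diagonal _) _,
    Matrix.diagonal_mul_diagonal]
  push_cast
  ring_nf

lemma star_matFun {n : ℕ} (A : Matrix (Fin n) (Fin n) ℂ) (hA : A.IsHermitian)
    (g : ℝ → ℝ) : star (matFun A hA g) = matFun A hA g := by
  simp only [matFun, star_eq_conjTranspose, conjTranspose_mul, conjTranspose_conjTranspose,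
    diagonal_conjTranspose]
  rw [Matrix.mul_assoc]
  congr 1
  ext i j
  simp [Matrix.diagonal_apply]

lemma mpow_mul_mpow {n : ℕ} (A : Matrix (Fin n) (Fin n) ℂ) (hA : A.PosDef)
    (p q : ℝ) : mpow A hA.1 p * mpow A hA.1 q = mpow A hA.1 (p + q) := by
  rw [mpow, mpow, matFun_mul, mpow]
  unfold matFun
  have hfun : (fun i => ((((fun t => t ^ p * t ^ q) (hA.1.eigenvalues i) : ℝ)) : ℂ)) =
      fun i => ((((fun t => t ^ (p + q)) (hA.1.eigenvalues i) : ℝ)) : ℂ) := by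
    funext i
    norm_cast
    exact (Real.rpow_add (hA.eigenvalues_pos i) p q).symm
  rw [hfun]

lemma trace_cs {n : ℕ} (X Y : Matrix (Fin n) (Fin n) ℂ) :
    (Matrix.trace (star X * Y)).re ^ 2 ≤
      (Matrix.trace (star X * X)).re * (Matrix.trace (star Y * Y)).re := by
  let e : Matrix (Fin n) (Fin n) ℂ → EuclideanSpace ℂ (Fin n × Fin n) :=
    fun M => WithLp.toLp 2 (fun p => M p.2 p.1)
  have key : ∀ M N : Matrix (Fin n) (Fin n) ℂ,
      Matrix.trace (star M * N) = inner (𝕜 := ℂ) (e M) (e N) := by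
    intro M N
    simp only [Matrix.trace, Matrix.diag, Matrix.mul_apply, star_eq_conjTranspose,
      conjTranspose_apply, PiLp.inner_apply, RCLike.inner_apply]
    rw [Finset.sum_comm, Fintype.sum_prod_type]
    simp only [e, mul_comm]
    exact Finset.sum_comm
  rw [key, key, key]
  have h := inner_mul_inner_self_le (𝕜 := ℂ) (e X) (e Y)
  have h2 : ‖inner (𝕜 := ℂ) (e Y) (e X)‖ = ‖inner (𝕜 := ℂ) (e X) (e Y)‖ :=
    norm_inner_symm _ _
  rw [h2] at h
  calc (inner (𝕜 := ℂ) (e X) (e Y)).re ^ 2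
      = |(inner (𝕜 := ℂ) (e X) (e Y)).re| ^ 2 := (sq_abs _).symm
    _ ≤ ‖inner (𝕜 := ℂ) (e X) (e Y)‖ ^ 2 := by
        apply pow_le_pow_left₀ (abs_nonneg _)
        exact Complex.abs_re_le_norm _
    _ ≤ (inner (𝕜 := ℂ) (e X) (e X)).re * (inner (𝕜 := ℂ) (e Y) (e Y)).re := by
        rw [sq]; exact h

/-- Hilbert-Schmidt (Frobenius) norm of a matrix. -/
noncomputable def frob {n : ℕ} (X : Matrix (Fin n) (Fin n) ℂ) : ℝ :=
  Real.sqrt (Matrix.trace (star X * X)).re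

theorem stmt10 {n : ℕ} (A B : Matrix (Fin n) (Fin n) ℂ)
    (hA : A.PosDef) (hB : B.PosDef) (x y : ℝ) :
    (Matrix.trace (mpow A hA.1 (2 * ((x + y) / 2)) *
        mpow B hB.1 (2 * (1 - (x + y) / 2)))).re ^ 2 ≤
      (Matrix.trace (mpow A hA.1 (2 * x) * mpow B hB.1 (2 * (1 - x)))).re *
        (Matrix.trace (mpow A hA.1 (2 * y) * mpow B hB.1 (2 * (1 - y)))).re := by
  set P := fun s => mpow A hA.1 s with hP
  set Q := fun s => mpow B hB.1 s with hQ
  have hPs : ∀ s, star (P s) = P s := fun s => star_matFun _ _ _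
  have hQs : ∀ s, star (Q s) = Q s := fun s => star_matFun _ _ _
  have hPm : ∀ p q, P p * P q = P (p + q) := fun p q => mpow_mul_mpow A hA p q
  have hQm : ∀ p q, Q p * Q q = Q (p + q) := fun p q => mpow_mul_mpow B hB p q
  set Mx := P x * Q (1 - x) with hMx
  set My := P y * Q (1 - y) with hMy
  have key : ∀ a b : ℝ, Matrix.trace (star (P a * Q (1 - a)) * (P b * Q (1 - b))) =
      Matrix.trace (P (a + b) * Q (2 - (a + b))) := by
    intro a b
    rw [StarMul.star_mul, hPs, hQs, Matrix.mul_assoc, ← Matrix.mul_assoc (P a) (P b) _, hPm,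
      Matrix.trace_mul_comm, Matrix.mul_assoc, hQm]
    congr 2
    ring
  have h := trace_cs Mx My
  rw [hMx, hMy, key, key, key] at h
  rw [show (2:ℝ) * ((x + y) / 2) = x + y by ring,
    show (2:ℝ) * (1 - (x + y) / 2) = 2 - (x + y) by ring,
    show (2:ℝ) * x = x + x by ring, show (2:ℝ) * (1 - x) = 2 - (x + x) by ring,
    show (2:ℝ) * y = y + y by ring, show (2:ℝ) * (1 - y) = 2 - (y + y) by ring]
  exact h
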